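/- Let D = (c_1,…,c_n) be a p-monotone Ferrers diagram of order n = p^m. Let λ_1,…,λ_n ∈ L with λ_i ∈ F_{c_i} for each i, and let f ∈ End_F(L) be the endomorphism f = Σ_{i=1}^n λ_i·σ̄^{i−1} (where λ_i acts on L by multiplication). Then f(F_i) ⊆ F_{c_i} for every i ∈ {1,…,n}. -/

import Mathlib

/-- A Ferrers diagram of order `n`, given by its column heights
`c 0 ≤ c 1 ≤ … ≤ c (n-1) ≤ n` (so `c j` is the number of dots in the (j+1)-st column). -/
def IsFerrersDiagram (n : ℕ) (c : Fin n → ℕ) : Prop :=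
  Monotone c ∧ ∀ i, c i ≤ n

/-- Extension of the column-height function to `ℕ`, by zero. -/
def colExt (n : ℕ) (c : Fin n → ℕ) : ℕ → ℕ :=
  fun k => if h : k < n then c ⟨k, h⟩ else 0

/-- `ν_j(D,d) = Σ_{i=1}^{n-j} max{0, c_i - d + 1 + j}` (truncated subtraction gives the max). -/
def nuJ (n d j : ℕ) (c : Fin n → ℕ) : ℕ :=
  ∑ i ∈ Finset.range (n - j), (colExt n c i + 1 + j - d)

/-- `ν_min(D,d) = min{ν_j(D,d) : 0 ≤ j ≤ d-1}`. -/
noncomputable def nuMin (n d : ℕ) (c : Fin n → ℕ) : ℕ :=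
  sInf {k | ∃ j < d, k = nuJ n d j c}

/-- A Ferrers diagram is monotone if `c (i+1) > c i` whenever `0 < c i < n`. -/
def DiagMonotone (n : ℕ) (c : Fin n → ℕ) : Prop :=
  ∀ i : Fin n, ∀ hi : (i : ℕ) + 1 < n, 0 < c i → c i < n → c i < c ⟨(i : ℕ) + 1, hi⟩

/-- A Ferrers diagram is convex if `c (i+1) - c i ≤ 1` for all `i`. -/
def DiagConvex (n : ℕ) (c : Fin n → ℕ) : Prop :=
  ∀ i : Fin n, ∀ hi : (i : ℕ) + 1 < n, c ⟨(i : ℕ) + 1, hi⟩ ≤ c i + 1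

/-- A Ferrers diagram is strictly monotone if `c (i+1) > c i` whenever `c i > 0`. -/
def DiagStrictlyMonotone (n : ℕ) (c : Fin n → ℕ) : Prop :=
  ∀ i : Fin n, ∀ hi : (i : ℕ) + 1 < n, 0 < c i → c i < c ⟨(i : ℕ) + 1, hi⟩

/-- A Ferrers diagram is initially convex if `c 1 ≤ 1` and `c (i+1) - c i ≤ 1` for all `i`. -/
def DiagInitiallyConvex (n : ℕ) (c : Fin n → ℕ) : Prop :=
  (∀ h : 0 < n, c ⟨0, h⟩ ≤ 1) ∧ DiagConvex n c

/-- `h` is an admissible `p`-height for the Ferrers diagram `c`: `p^h ∣ n`, `p^h ∣ c i` for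
all `i`, and `c (n-r) = c (n-s)` (1-indexed) whenever `r, s` lie in the same block
`{Q p^h, …, (Q+1) p^h - 1}`. -/
def HeightOK (p n h : ℕ) (c : Fin n → ℕ) : Prop :=
  p ^ h ∣ n ∧ (∀ i, p ^ h ∣ c i) ∧
    ∀ r s : Fin n, (r : ℕ) / p ^ h = (s : ℕ) / p ^ h →
      c ⟨n - 1 - (r : ℕ), by have := r.isLt; omega⟩ =
        c ⟨n - 1 - (s : ℕ), by have := s.isLt; omega⟩

/-- The `p`-height of a Ferrers diagram: the largest admissible `h`. -/
noncomputable def pHeight (p n : ℕ) (c : Fin n → ℕ) : ℕ :=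
  sSup {h | HeightOK p n h c}

/-- The `p`-contraction of a Ferrers diagram: `c'_i = c_{p^h i} / p^h` (1-indexed),
a diagram of order `n / p^h`, where `h` is the `p`-height. -/
noncomputable def pContraction (p n : ℕ) (c : Fin n → ℕ) :
    Fin (n / p ^ pHeight p n c) → ℕ :=
  fun i => colExt n c (p ^ pHeight p n c * ((i : ℕ) + 1) - 1) / p ^ pHeight p n c

/-- A Ferrers diagram is `p`-monotone if its `p`-contraction is monotone. -/
def IsPMonotone (p n : ℕ) (c : Fin n → ℕ) : Prop :=
  DiagMonotone (n / p ^ pHeight p n c) (pContraction p n c)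

/-- A Ferrers diagram is `p`-convex if its `p`-contraction is convex. -/
def IsPConvex (p n : ℕ) (c : Fin n → ℕ) : Prop :=
  DiagConvex (n / p ^ pHeight p n c) (pContraction p n c)

/-- A Ferrers diagram is strictly `p`-monotone if its `p`-contraction is strictly monotone. -/
def IsStrictlyPMonotone (p n : ℕ) (c : Fin n → ℕ) : Prop :=
  DiagStrictlyMonotone (n / p ^ pHeight p n c) (pContraction p n c)

/-- A Ferrers diagram is initially `p`-convex if its `p`-contraction is initially convex. -/
def IsInitiallyPConvex (p n : ℕ) (c : Fin n → ℕ) : Prop :=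
  DiagInitiallyConvex (n / p ^ pHeight p n c) (pContraction p n c)

/-- The adjoint Ferrers diagram: column `j+1` of `D^⊤` has `#{i : c i ≥ n - j}` dots. -/
def adjointDiag (n : ℕ) (c : Fin n → ℕ) : Fin n → ℕ :=
  fun j => (Finset.univ.filter (fun i : Fin n => n - (j : ℕ) ≤ c i)).card

/-- `|D ∩ Δ_{i+1}^n|`: the number of dots of `D` on the (i+1)-st diagonal (0-indexed `i`). -/
def diagDots (n : ℕ) (c : Fin n → ℕ) (i : ℕ) : ℕ :=
  ((Finset.range n).filter (fun r => r + i < n ∧ r < colExt n c (r + i))).card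

/-- The pair `(D, d)` is MDS-constructible if
`ν_min(D,d) = Σ_{i=1}^n max{0, |D ∩ Δ_i^n| - d + 1}`. -/
def IsMDSConstructibleP (n d : ℕ) (c : Fin n → ℕ) : Prop :=
  nuMin n d c = ∑ i ∈ Finset.range n, (diagDots n c i + 1 - d)

/-- `σ̄ = σ - id`, as an `F`-linear endomorphism of `L`. -/
def sbar {F L : Type*} [Field F] [Field L] [Algebra F L] (σ : L ≃ₐ[F] L) :
    L →ₗ[F] L :=
  σ.toLinearMap - LinearMap.id
section helpers
variable {F L : Type*} [Field F] [Field L] [Algebra F L]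

lemma sbar_apply (τ : L ≃ₐ[F] L) (x : L) : sbar τ x = τ x - x := rfl

lemma sbar_comm_apply (τ : L ≃ₐ[F] L) (x : L) : sbar τ (τ x) = τ (sbar τ x) := by
  simp [sbar_apply, map_sub]

lemma sbar_pow_comm (τ : L ≃ₐ[F] L) (s : ℕ) (x : L) :
    (sbar τ ^ s) (τ x) = τ ((sbar τ ^ s) x) := by
  induction s with
  | zero => simp
  | succ k ih =>
    rw [pow_succ', Module.End.mul_apply, Module.End.mul_apply, ih, sbar_comm_apply]

lemma sbar_mul (τ : L ≃ₐ[F] L) (a b : L) :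
    sbar τ (a * b) = τ a * sbar τ b + sbar τ a * b := by
  simp only [sbar_apply, map_mul]; ring

lemma sbar_leibniz (τ : L ≃ₐ[F] L) : ∀ k s t : ℕ, s + t ≤ k → ∀ a b : L,
    (sbar τ ^ s) a = 0 → (sbar τ ^ t) b = 0 → (sbar τ ^ (s + t - 1)) (a * b) = 0 := by
  intro k
  induction k with
  | zero =>
    intro s t hst a b ha hb
    have hs : s = 0 := by omega
    have ht : t = 0 := by omega
    subst hs; subst ht
    simp only [pow_zero, Module.End.one_apply] at ha hb ⊢
    rw [ha, zero_mul, map_zero]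
  | succ k ih =>
    intro s t hst a b ha hb
    match s, t with
    | 0, t =>
      simp only [pow_zero, Module.End.one_apply] at ha
      rw [ha, zero_mul, map_zero]
    | s, 0 =>
      simp only [pow_zero, Module.End.one_apply] at hb
      rw [hb, mul_zero, map_zero]
    | s' + 1, t' + 1 =>
      have hgoal : s' + 1 + (t' + 1) - 1 = (s' + t') + 1 := by omega
      rw [hgoal, pow_succ, Module.End.mul_apply, sbar_mul, map_add]
      have h1 : (sbar τ ^ (s' + t')) (τ a * sbar τ b) = 0 := by
        have := ih (s' + 1) t' (by omega) (τ a) (sbar τ b)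
          (by rw [sbar_pow_comm, ha, map_zero])
          (by rw [← Module.End.mul_apply, ← pow_succ]; exact hb)
        simpa using this
      have h2 : (sbar τ ^ (s' + t')) (sbar τ a * b) = 0 := by
        have := ih s' (t' + 1) (by omega) (sbar τ a) b
          (by rw [← Module.End.mul_apply, ← pow_succ]; exact ha)
          hb
        simpa using this
      rw [h1, h2, add_zero]

lemma pow_ker_mono (S : L →ₗ[F] L) {a b : ℕ} (h : a ≤ b) (x : L) (hx : (S ^ a) x = 0) :
    (S ^ b) x = 0 := by
  rw [show b = (b - a) + a from (Nat.sub_add_cancel h).symm, pow_add, Module.End.mul_apply,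
    hx, map_zero]

lemma toLinearMap_pow (σ : L ≃ₐ[F] L) (k : ℕ) :
    (σ ^ k).toLinearMap = σ.toLinearMap ^ k := by
  induction k with
  | zero => ext x; simp
  | succ k ih =>
    ext x
    rw [pow_succ, pow_succ]
    simp only [AlgEquiv.toLinearMap_apply, AlgEquiv.mul_apply, Module.End.mul_apply, ← ih]


lemma sbar_pow_eq {p : ℕ} [Fact p.Prime] [CharP F p] (σ : L ≃ₐ[F] L) (k : ℕ) :
    sbar σ ^ p ^ k = sbar (σ ^ p ^ k) := by
  haveI : CharP (L →ₗ[F] L) p :=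
    charP_of_injective_algebraMap (algebraMap F (L →ₗ[F] L)).injective p
  have hone : (LinearMap.id : L →ₗ[F] L) = 1 := rfl
  unfold sbar
  rw [hone, sub_pow_char_pow_of_commute p k (Commute.one_right _), toLinearMap_pow, one_pow]

lemma sbar_one : sbar (1 : L ≃ₐ[F] L) = 0 := by
  ext x; simp [sbar_apply]

end helpers

section comb

lemma heightOK_pHeight {p n : ℕ} (hp : 1 < p) (hn : 0 < n) (c : Fin n → ℕ) :
    HeightOK p n (pHeight p n c) c := by
  have h0 : HeightOK p n 0 c := by
    refine ⟨one_dvd _, fun i => one_dvd _, fun r s hrs => ?_⟩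
    simp only [pow_zero, Nat.div_one] at hrs
    congr 1
    simp only [Fin.mk.injEq]
    omega
  have hb : BddAbove {h | HeightOK p n h c} := by
    refine ⟨n, fun h hh => ?_⟩
    have h1 : p ^ h ∣ n := hh.1
    have h2 : h < p ^ h := Nat.lt_pow_self hp
    have h3 : p ^ h ≤ n := Nat.le_of_dvd hn h1
    omega
  have : pHeight p n c ∈ {h | HeightOK p n h c} := Nat.sSup_mem ⟨0, h0⟩ hb
  exact this

lemma hdivtop_lemma {q N n : ℕ} (hq0 : 0 < q) (hN : q * N = n) (a : ℕ) (ha : a < n) :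
    (n - 1 - a) / q = N - 1 - a / q := by
  have hr : q * (a / q) + a % q = a := Nat.div_add_mod a q
  have hrlt : a % q < q := Nat.mod_lt _ hq0
  have hQN : a / q < N := Nat.div_lt_of_lt_mul (by omega)
  have e1 : q * (N - 1 - a / q) + q * (a / q) + q = n := by
    have h2 : (N - 1 - a / q) + (a / q) + 1 = N := by omega
    calc q * (N - 1 - a / q) + q * (a / q) + q
        = q * ((N - 1 - a / q) + (a / q) + 1) := by ring
      _ = q * N := by rw [h2]
      _ = n := hN
  have e2 : n - 1 - a = q * (N - 1 - a / q) + (q - 1 - a % q) := by omega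
  rw [e2, Nat.mul_add_div hq0, Nat.div_eq_of_lt (show q - 1 - a % q < q by omega),
    Nat.add_zero]

lemma block_const {p n H N : ℕ} {c : Fin n → ℕ} (hOK : HeightOK p n H c)
    (hq0 : 0 < p ^ H) (hN : p ^ H * N = n)
    (a b : ℕ) (ha : a < n) (hb : b < n) (hab : a / p ^ H = b / p ^ H) :
    c ⟨a, ha⟩ = c ⟨b, hb⟩ := by
  have h := hOK.2.2 ⟨n - 1 - a, by omega⟩ ⟨n - 1 - b, by omega⟩
    (by simp only [Fin.val_mk]
        rw [hdivtop_lemma hq0 hN a ha, hdivtop_lemma hq0 hN b hb, hab])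
  simp only [Fin.val_mk] at h
  simp only [show n - 1 - (n - 1 - a) = a from by omega,
    show n - 1 - (n - 1 - b) = b from by omega] at h
  exact h

lemma chain_lemma {N : ℕ} (c' : Fin N → ℕ) (hmono : Monotone c')
    (hstep : DiagMonotone N c') :
    ∀ d K, ∀ hK : K < N, ∀ hKd : K + d < N, 0 < c' ⟨K, hK⟩ → c' ⟨K + d, hKd⟩ < N →
      c' ⟨K, hK⟩ + d ≤ c' ⟨K + d, hKd⟩ := by
  intro d
  induction d with
  | zero => intro K hK hKd _ _; exact le_refl _
  | succ d ih =>
    intro K hK hKd h0 hlt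
    have hKd' : K + d < N := by omega
    have hlt1 : c' ⟨K + d + 1, hKd⟩ < N := hlt
    have hmono1 : c' ⟨K + d, hKd'⟩ ≤ c' ⟨K + d + 1, hKd⟩ :=
      hmono (by simp only [Fin.mk_le_mk]; omega)
    have hlt' : c' ⟨K + d, hKd'⟩ < N := lt_of_le_of_lt hmono1 hlt1
    have ihh := ih K hK hKd' h0 hlt'
    have hstep' : c' ⟨K + d, hKd'⟩ < c' ⟨K + d + 1, hKd⟩ :=
      hstep ⟨K + d, hKd'⟩ (by simp only [Fin.val_mk]; omega) (by omega) hlt'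
    show c' ⟨K, hK⟩ + (d + 1) ≤ c' ⟨K + d + 1, hKd⟩
    omega

lemma key_ineq' {n q N : ℕ} (hq0 : 0 < q) (hN : q * N = n)
    (c : Fin n → ℕ) (c' : Fin N → ℕ) (hmc : Monotone c)
    (hstep : DiagMonotone N c')
    (hblock : ∀ a b : ℕ, ∀ ha : a < n, ∀ hb : b < n, a / q = b / q →
      c ⟨a, ha⟩ = c ⟨b, hb⟩)
    (hdvd : ∀ i : Fin n, q ∣ c i)
    (hC : ∀ k : ℕ, ∀ hk : k < N, ∀ h2 : q * (k + 1) - 1 < n,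
      c' ⟨k, hk⟩ = c ⟨q * (k + 1) - 1, h2⟩ / q)
    {i j : Fin n} (hij : (j : ℕ) ≤ i) (hcj : 0 < c j) (hci : c i < n) :
    c j + q * (((i : ℕ) - j) / q) ≤ c i := by
  have hn0 : 0 < n := i.pos
  have hN0 : 0 < N := by
    rcases Nat.eq_zero_or_pos N with h | h
    · rw [h, Nat.mul_zero] at hN; omega
    · exact h
  -- the top index of each block is in range
  have hidx : ∀ k : ℕ, k < N → q * (k + 1) - 1 < n := by
    intro k hk
    have h1 : q * (k + 1) ≤ q * N := Nat.mul_le_mul_left q (by omega)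
    omega
  -- the top index of a block lies in the same block
  have hsame : ∀ k : ℕ, (q * (k + 1) - 1) / q = k := by
    intro k
    have e0 : q * (k + 1) = q * k + q := by ring
    have e : q * (k + 1) - 1 = q * k + (q - 1) := by omega
    rw [e, Nat.mul_add_div hq0, Nat.div_eq_of_lt (show q - 1 < q by omega), Nat.add_zero]
  -- c in terms of c'
  have hCval : ∀ a : ℕ, ∀ ha : a < n,
      c ⟨a, ha⟩ = q * c' ⟨a / q, Nat.div_lt_of_lt_mul (by omega)⟩ := by
    intro a ha
    have hkN : a / q < N := Nat.div_lt_of_lt_mul (by omega)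
    have h1 : c ⟨a, ha⟩ = c ⟨q * (a / q + 1) - 1, hidx _ hkN⟩ :=
      hblock a (q * (a / q + 1) - 1) ha (hidx _ hkN) (by rw [hsame])
    rw [h1, hC _ hkN (hidx _ hkN),
      Nat.mul_div_cancel' (hdvd ⟨q * (a / q + 1) - 1, hidx _ hkN⟩)]
  -- c' is monotone
  have hmono' : Monotone c' := by
    intro k l hkl
    have hkN := k.isLt
    have hlN := l.isLt
    have e1 : c' k = c ⟨q * ((k : ℕ) + 1) - 1, hidx _ hkN⟩ / q := by
      rw [← hC _ hkN]
    have e2 : c' l = c ⟨q * ((l : ℕ) + 1) - 1, hidx _ hlN⟩ / q := by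
      rw [← hC _ hlN]
    rw [e1, e2]
    apply Nat.div_le_div_right
    apply hmc
    simp only [Fin.mk_le_mk]
    have : q * ((k : ℕ) + 1) ≤ q * ((l : ℕ) + 1) :=
      Nat.mul_le_mul_left q (by exact_mod_cast Nat.add_le_add_right hkl 1)
    omega
  -- put the indices in blocks
  have hKN : (j : ℕ) / q < N := Nat.div_lt_of_lt_mul (by have := j.isLt; omega)
  have hIN : (i : ℕ) / q < N := Nat.div_lt_of_lt_mul (by have := i.isLt; omega)
  have hcjv : c j = q * c' ⟨(j : ℕ) / q, hKN⟩ := by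
    have := hCval (j : ℕ) j.isLt
    rw [Fin.eta] at this
    exact this
  have hciv : c i = q * c' ⟨(i : ℕ) / q, hIN⟩ := by
    have := hCval (i : ℕ) i.isLt
    rw [Fin.eta] at this
    exact this
  have hKI : (j : ℕ) / q ≤ (i : ℕ) / q := Nat.div_le_div_right hij
  have hd : (j : ℕ) / q + ((i : ℕ) / q - (j : ℕ) / q) < N := by omega
  have hposK : 0 < c' ⟨(j : ℕ) / q, hKN⟩ :=
    Nat.pos_of_ne_zero (fun h => by rw [h, Nat.mul_zero] at hcjv; omega)
  have hltI : c' ⟨(i : ℕ) / q, hIN⟩ < N :=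
    Nat.lt_of_mul_lt_mul_left (a := q) (by omega)
  have hfe : (⟨(j : ℕ) / q + ((i : ℕ) / q - (j : ℕ) / q), hd⟩ : Fin N)
      = ⟨(i : ℕ) / q, hIN⟩ := Fin.ext (by simp only [Fin.val_mk]; omega)
  have hltI' : c' ⟨(j : ℕ) / q + ((i : ℕ) / q - (j : ℕ) / q), hd⟩ < N := by
    rw [hfe]; exact hltI
  have hchain := chain_lemma c' hmono' hstep ((i : ℕ) / q - (j : ℕ) / q) ((j : ℕ) / q)
    hKN hd hposK hltI'
  rw [hfe] at hchain
  -- multiply through by q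
  have hmul : q * (c' ⟨(j : ℕ) / q, hKN⟩ + ((i : ℕ) / q - (j : ℕ) / q))
      ≤ q * c' ⟨(i : ℕ) / q, hIN⟩ := Nat.mul_le_mul_left q hchain
  have hexp : q * (c' ⟨(j : ℕ) / q, hKN⟩ + ((i : ℕ) / q - (j : ℕ) / q))
      = q * c' ⟨(j : ℕ) / q, hKN⟩ + q * ((i : ℕ) / q - (j : ℕ) / q) := by ring
  -- floor-division subadditivity
  have hXK : ((i : ℕ) - j) / q + (j : ℕ) / q ≤ (i : ℕ) / q := by
    rw [Nat.le_div_iff_mul_le hq0, Nat.add_mul]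
    have h1 := Nat.div_mul_le_self ((i : ℕ) - (j : ℕ)) q
    have h2 := Nat.div_mul_le_self (j : ℕ) q
    omega
  have hXK2 : q * (((i : ℕ) - j) / q) ≤ q * ((i : ℕ) / q - (j : ℕ) / q) :=
    Nat.mul_le_mul_left q (by omega)
  omega

end comb

/-- if `D = (c_1,…,c_n)` is a `p`-monotone Ferrers diagram of order
`n = p^m`, `λ_i ∈ F_{c_i}` for each `i`, and `f = Σ_{i=1}^n λ_i · σ̄^{i-1}`, then
`f(F_i) ⊆ F_{c_i}` for every `i ∈ {1,…,n}`. -/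
theorem statement5 {p m : ℕ} (hp : p.Prime) (hm : 1 ≤ m)
    {F L : Type*} [Field F] [Field L] [Algebra F L] [IsGalois F L] [FiniteDimensional F L]
    [CharP F p] (hn : Module.finrank F L = p ^ m)
    (σ : L ≃ₐ[F] L) (hσ : ∀ τ : L ≃ₐ[F] L, τ ∈ Subgroup.zpowers σ)
    (c : Fin (p ^ m) → ℕ) (hferr : IsFerrersDiagram (p ^ m) c)
    (hmon : IsPMonotone p (p ^ m) c)
    (lam : Fin (p ^ m) → L) (hlam : ∀ i, lam i ∈ LinearMap.ker (sbar σ ^ c i))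
    (f : L →ₗ[F] L)
    (hf : ∀ x : L, f x = ∑ i : Fin (p ^ m), lam i * (sbar σ ^ (i : ℕ)) x)
    (i : Fin (p ^ m)) (x : L) (hx : x ∈ LinearMap.ker (sbar σ ^ ((i : ℕ) + 1))) :
    f x ∈ LinearMap.ker (sbar σ ^ c i) := by
  haveI : Fact p.Prime := ⟨hp⟩
  have hq0 : 0 < p ^ pHeight p (p ^ m) c := pow_pos hp.pos _
  have hn0 : 0 < p ^ m := pow_pos hp.pos m
  have hOK : HeightOK p (p ^ m) (pHeight p (p ^ m) c) c :=
    heightOK_pHeight hp.one_lt hn0 c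
  have hN : p ^ pHeight p (p ^ m) c * (p ^ m / p ^ pHeight p (p ^ m) c) = p ^ m :=
    Nat.mul_div_cancel' hOK.1
  have hblock := block_const hOK hq0 hN
  have hC : ∀ k : ℕ, ∀ hk : k < p ^ m / p ^ pHeight p (p ^ m) c,
      ∀ h2 : p ^ pHeight p (p ^ m) c * (k + 1) - 1 < p ^ m,
      pContraction p (p ^ m) c ⟨k, hk⟩ =
        c ⟨p ^ pHeight p (p ^ m) c * (k + 1) - 1, h2⟩ / p ^ pHeight p (p ^ m) c := by
    intro k hk h2
    simp only [pContraction, colExt, Fin.val_mk, h2, dif_pos]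
  -- group-theoretic facts
  have hσ1 : σ ^ p ^ m = 1 := by
    have hcard : Fintype.card (L ≃ₐ[F] L) = p ^ m := by
      rw [← Nat.card_eq_fintype_card, IsGalois.card_aut_eq_finrank, hn]
    rw [← hcard]
    exact pow_card_eq_one
  have hSn : sbar σ ^ p ^ m = 0 := by
    rw [sbar_pow_eq σ m, hσ1, sbar_one]
  have hτ : sbar σ ^ p ^ pHeight p (p ^ m) c = sbar (σ ^ p ^ pHeight p (p ^ m) c) :=
    sbar_pow_eq σ _
  have hxe : (sbar σ ^ ((i : ℕ) + 1)) x = 0 := LinearMap.mem_ker.mp hx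
  rw [LinearMap.mem_ker, hf x, map_sum]
  apply Finset.sum_eq_zero
  intro j _
  by_cases hji : (i : ℕ) < j
  · have h0 : (sbar σ ^ (j : ℕ)) x = 0 := pow_ker_mono _ (by omega) x hxe
    rw [h0, mul_zero, map_zero]
  push_neg at hji
  by_cases hcj0 : c j = 0
  · have hl0 : lam j = 0 := by
      have := LinearMap.mem_ker.mp (hlam j)
      rwa [hcj0, pow_zero, Module.End.one_apply] at this
    rw [hl0, zero_mul, map_zero]
  have hcj : 0 < c j := Nat.pos_of_ne_zero hcj0
  by_cases hcin : c i = p ^ m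
  · rw [hcin, hSn]
    rfl
  have hci : c i < p ^ m := lt_of_le_of_ne (hferr.2 i) hcin
  have hkey : c j + p ^ pHeight p (p ^ m) c * (((i : ℕ) - j) / p ^ pHeight p (p ^ m) c)
      ≤ c i :=
    key_ineq' hq0 hN c (pContraction p (p ^ m) c) hferr.1 hmon hblock hOK.2.1 hC hji hcj hci
  obtain ⟨a, ha⟩ := hOK.2.1 j
  have hdm := Nat.div_add_mod ((i : ℕ) - j) (p ^ pHeight p (p ^ m) c)
  have hmlt := Nat.mod_lt ((i : ℕ) - j) hq0
  have h1 : (sbar σ ^ ((i : ℕ) + 1 - j)) ((sbar σ ^ (j : ℕ)) x) = 0 := by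
    rw [← Module.End.mul_apply, ← pow_add, show (i : ℕ) + 1 - j + j = (i : ℕ) + 1 from by omega]
    exact hxe
  have hqb : (i : ℕ) + 1 - j
      ≤ p ^ pHeight p (p ^ m) c * (((i : ℕ) - j) / p ^ pHeight p (p ^ m) c + 1) := by
    have e : p ^ pHeight p (p ^ m) c * (((i : ℕ) - j) / p ^ pHeight p (p ^ m) c + 1)
        = p ^ pHeight p (p ^ m) c * (((i : ℕ) - j) / p ^ pHeight p (p ^ m) c)
          + p ^ pHeight p (p ^ m) c := by ring
    omega
  have h2 : (sbar σ ^ (p ^ pHeight p (p ^ m) c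
      * (((i : ℕ) - j) / p ^ pHeight p (p ^ m) c + 1))) ((sbar σ ^ (j : ℕ)) x) = 0 :=
    pow_ker_mono _ hqb _ h1
  have hA : (sbar (σ ^ p ^ pHeight p (p ^ m) c) ^ a) (lam j) = 0 := by
    rw [← hτ, ← pow_mul, ← ha]
    exact LinearMap.mem_ker.mp (hlam j)
  have hB : (sbar (σ ^ p ^ pHeight p (p ^ m) c)
      ^ (((i : ℕ) - j) / p ^ pHeight p (p ^ m) c + 1)) ((sbar σ ^ (j : ℕ)) x) = 0 := by
    rw [← hτ, ← pow_mul]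
    exact h2
  have hprod := sbar_leibniz (σ ^ p ^ pHeight p (p ^ m) c)
    (a + (((i : ℕ) - j) / p ^ pHeight p (p ^ m) c + 1)) a
    (((i : ℕ) - j) / p ^ pHeight p (p ^ m) c + 1) le_rfl
    (lam j) ((sbar σ ^ (j : ℕ)) x) hA hB
  rw [show a + (((i : ℕ) - j) / p ^ pHeight p (p ^ m) c + 1) - 1
      = a + ((i : ℕ) - j) / p ^ pHeight p (p ^ m) c from Nat.succ_sub_one _, ← hτ,
    ← pow_mul] at hprod
  refine pow_ker_mono _ ?_ _ hprod
  have e : p ^ pHeight p (p ^ m) c * (a + ((i : ℕ) - j) / p ^ pHeight p (p ^ m) c)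
      = p ^ pHeight p (p ^ m) c * a
        + p ^ pHeight p (p ^ m) c * (((i : ℕ) - j) / p ^ pHeight p (p ^ m) c) := by ring
  omega
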